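/- If cut-error bounds hold for all connected induced subsets, they hold for all subsets: let G be a graph on V, E and F two edge sets on V with F ⊆ E, and α ≥ 0. Suppose for every S ⊆ V such that the subgraph of G induced on S is connected, |2·e_F(S) - e_E(S)| ≤ α·|S|. If additionally G contains all edges of E, then |2·e_F(S) - e_E(S)| ≤ α·|S| for every S ⊆ V. -/

import Mathlib

/-- Number of edges of the graph `H` crossing the cut `(S, Sᶜ)`. -/
def cutCount {V : Type*} [Fintype V] [DecidableEq V] (H : SimpleGraph V)
    [DecidableRel H.Adj] (S : Finset V) : ℕ :=
  ((S ×ˢ Sᶜ).filter fun p => H.Adj p.1 p.2).card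

/-- The restriction of a graph to edges with both endpoints in `S`. -/
def restrictG {V : Type*} [DecidableEq V] (G : SimpleGraph V) (S : Finset V) : SimpleGraph V where
  Adj a b := G.Adj a b ∧ a ∈ S ∧ b ∈ S
  symm := ⟨fun a b h => ⟨h.1.symm, h.2.2, h.2.1⟩⟩
  loopless := ⟨fun a h => G.loopless.irrefl a h.1⟩

instance {V : Type*} [DecidableEq V] (G : SimpleGraph V) [DecidableRel G.Adj] (S : Finset V) :
    DecidableRel (restrictG G S).Adj := fun a b => instDecidableAnd

lemma restrictG_le {V : Type*} [DecidableEq V] (G : SimpleGraph V) (S : Finset V) :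
    restrictG G S ≤ G := fun _ _ h => h.1

lemma support_mem_S {V : Type*} [DecidableEq V] {G : SimpleGraph V} {S : Finset V} {u v : V}
    (p : (restrictG G S).Walk u v) (hv : v ∈ S) : ∀ w ∈ p.support, w ∈ S := by
  induction p with
  | nil => intro w hw; simp at hw; subst hw; exact hv
  | cons h q ih =>
    intro w hw
    rcases List.mem_cons.mp hw with rfl | hw
    · exact h.2.1
    · exact ih hv w hw

lemma support_reachable {V : Type*} [DecidableEq V] {G : SimpleGraph V} {S : Finset V} {u v : V}
    (p : (restrictG G S).Walk u v) : ∀ w ∈ p.support, (restrictG G S).Reachable w v :=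
  fun w hw => ⟨p.dropUntil w hw⟩

lemma cutCount_split {V : Type*} [Fintype V] [DecidableEq V] (H : SimpleGraph V)
    [DecidableRel H.Adj] (S T : Finset V) (hTS : T ⊆ S)
    (hno : ∀ a ∈ T, ∀ b ∈ S \ T, ¬ H.Adj a b) :
    cutCount H S = cutCount H T + cutCount H (S \ T) := by
  classical
  have h1 : ((T ×ˢ Tᶜ).filter fun p => H.Adj p.1 p.2)
      = ((T ×ˢ Sᶜ).filter fun p => H.Adj p.1 p.2) := by
    ext ⟨a, b⟩
    simp only [Finset.mem_filter, Finset.mem_product, Finset.mem_compl, Finset.mem_sdiff]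
    constructor
    · rintro ⟨⟨ha, hb⟩, hadj⟩
      refine ⟨⟨ha, fun hbS => ?_⟩, hadj⟩
      exact hno a ha b (Finset.mem_sdiff.mpr ⟨hbS, hb⟩) hadj
    · rintro ⟨⟨ha, hb⟩, hadj⟩
      exact ⟨⟨ha, fun hbT => hb (hTS hbT)⟩, hadj⟩
  have h2 : (((S \ T) ×ˢ (S \ T)ᶜ).filter fun p => H.Adj p.1 p.2)
      = (((S \ T) ×ˢ Sᶜ).filter fun p => H.Adj p.1 p.2) := by
    ext ⟨a, b⟩
    simp only [Finset.mem_filter, Finset.mem_product, Finset.mem_compl, Finset.mem_sdiff]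
    constructor
    · rintro ⟨⟨ha, hb⟩, hadj⟩
      refine ⟨⟨ha, fun hbS => ?_⟩, hadj⟩
      have hbT : b ∈ T := by
        by_contra hbT
        exact hb ⟨hbS, hbT⟩
      exact hno b hbT a (Finset.mem_sdiff.mpr ha) hadj.symm
    · rintro ⟨⟨ha, hb⟩, hadj⟩
      exact ⟨⟨ha, fun h => hb h.1⟩, hadj⟩
  have h3 : ((S ×ˢ Sᶜ).filter fun p => H.Adj p.1 p.2)
      = ((T ×ˢ Sᶜ).filter fun p => H.Adj p.1 p.2)
        ∪ (((S \ T) ×ˢ Sᶜ).filter fun p => H.Adj p.1 p.2) := by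
    rw [← Finset.filter_union, ← Finset.union_product]
    rw [Finset.union_sdiff_of_subset hTS]
  have hdisj : Disjoint ((T ×ˢ Sᶜ).filter fun p => H.Adj p.1 p.2)
      (((S \ T) ×ˢ Sᶜ).filter fun p => H.Adj p.1 p.2) := by
    apply Finset.disjoint_filter_filter
    rw [Finset.disjoint_left]
    rintro ⟨a, b⟩ h1 h2
    rw [Finset.mem_product] at h1 h2
    exact (Finset.mem_sdiff.mp h2.1).2 h1.1
  unfold cutCount
  rw [h1, h2, h3, Finset.card_union_of_disjoint hdisj]

lemma induce_component_connected' {V : Type*} [DecidableEq V] (G : SimpleGraph V)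
    (S T : Finset V) (v : V) (hv : v ∈ S) (hvT : v ∈ T) (hTS : T ⊆ S)
    (hreach : ∀ u ∈ T, (restrictG G S).Reachable u v)
    (hclosed : ∀ w ∈ S, (restrictG G S).Reachable w v → w ∈ T) :
    (G.induce (↑T : Set V)).Connected := by
  apply SimpleGraph.induce_connected_of_patches (s := (↑T : Set V)) v (by exact_mod_cast hvT)
  intro w hw
  have hwT : w ∈ T := by exact_mod_cast hw
  obtain ⟨p⟩ := hreach w hwT
  let q : G.Walk w v := p.mapLe (restrictG_le G S)
  have hsupp : ∀ x, x ∈ q.support ↔ x ∈ p.support := by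
    intro x
    simp only [q, SimpleGraph.Walk.mapLe, SimpleGraph.Walk.support_map, List.mem_map]
    constructor
    · rintro ⟨a, ha, rfl⟩; exact ha
    · intro hx; exact ⟨x, hx, rfl⟩
  refine ⟨{x | x ∈ q.support}, ?_, ?_, ?_, ?_⟩
  · intro x hx
    have hx' : x ∈ p.support := (hsupp x).mp hx
    have hxS : x ∈ S := support_mem_S p hv x hx'
    have hxr := support_reachable p x hx'
    exact_mod_cast hclosed x hxS hxr
  · exact q.end_mem_support
  · exact q.start_mem_support
  · exact (q.connected_induce_support).preconnected _ _

theorem stmt_17 {V : Type*} [Fintype V] [DecidableEq V]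
    (G E F : SimpleGraph V) [DecidableRel G.Adj] [DecidableRel E.Adj] [DecidableRel F.Adj]
    (hFE : F ≤ E) (hEG : E ≤ G) (α : ℝ) (hα : 0 ≤ α)
    (hconn : ∀ S : Finset V, (G.induce (↑S : Set V)).Connected →
      |2 * (cutCount F S : ℝ) - (cutCount E S : ℝ)| ≤ α * S.card) :
    ∀ S : Finset V, |2 * (cutCount F S : ℝ) - (cutCount E S : ℝ)| ≤ α * S.card := by
  classical
  suffices H : ∀ n (S : Finset V), S.card ≤ n →
      |2 * (cutCount F S : ℝ) - (cutCount E S : ℝ)| ≤ α * S.card by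
    intro S; exact H S.card S le_rfl
  intro n
  induction n with
  | zero =>
    intro S hS
    have hSe : S = ∅ := Finset.card_eq_zero.mp (Nat.le_zero.mp hS)
    subst hSe
    simp [cutCount]
  | succ n ih =>
    intro S hS
    rcases S.eq_empty_or_nonempty with rfl | ⟨v, hv⟩
    · simp [cutCount]
    haveI : DecidablePred fun u => (restrictG G S).Reachable u v := Classical.decPred _
    set T := S.filter (fun u => (restrictG G S).Reachable u v) with hTdef
    have hTS : T ⊆ S := Finset.filter_subset _ _
    have hvT : v ∈ T := Finset.mem_filter.mpr ⟨hv, SimpleGraph.Reachable.refl v⟩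
    have hreach : ∀ u ∈ T, (restrictG G S).Reachable u v := fun u hu =>
      (Finset.mem_filter.mp hu).2
    have hclosed : ∀ w ∈ S, (restrictG G S).Reachable w v → w ∈ T := fun w hw hr =>
      Finset.mem_filter.mpr ⟨hw, hr⟩
    have hTconn : (G.induce (↑T : Set V)).Connected :=
      induce_component_connected' G S T v hv hvT hTS hreach hclosed
    have hTbound := hconn T hTconn
    have hcross : ∀ a ∈ T, ∀ b ∈ S \ T, ¬ E.Adj a b := by
      intro a ha b hb hadj
      have hbS := (Finset.mem_sdiff.mp hb).1
      have hbT := (Finset.mem_sdiff.mp hb).2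
      have hG : (restrictG G S).Adj a b := ⟨hEG hadj, hTS ha, hbS⟩
      exact hbT (hclosed b hbS ((hG.symm.reachable).trans (hreach a ha)))
    have hcrossF : ∀ a ∈ T, ∀ b ∈ S \ T, ¬ F.Adj a b := fun a ha b hb hadj =>
      hcross a ha b hb (hFE hadj)
    by_cases hempty : S \ T = ∅
    · have hTeq : T = S :=
        Finset.Subset.antisymm hTS (Finset.sdiff_eq_empty_iff_subset.mp hempty)
      rw [hTeq] at hTbound
      exact hTbound
    · have hTne : 1 ≤ T.card := Finset.card_pos.mpr ⟨v, hvT⟩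
      have hcardT : T.card ≤ S.card := Finset.card_le_card hTS
      have hcardS : (S \ T).card = S.card - T.card := Finset.card_sdiff_of_subset hTS
      have hrest := ih (S \ T) (by omega)
      have hsplitE := cutCount_split E S T hTS hcross
      have hsplitF := cutCount_split F S T hTS hcrossF
      have hcardR : (S.card : ℝ) = T.card + ((S \ T).card : ℝ) := by
        rw [hcardS, Nat.cast_sub hcardT]; ring
      have hkey : 2 * (cutCount F S : ℝ) - (cutCount E S : ℝ)
          = (2 * (cutCount F T : ℝ) - (cutCount E T : ℝ))
            + (2 * (cutCount F (S \ T) : ℝ) - (cutCount E (S \ T) : ℝ)) := by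
        rw [hsplitE, hsplitF]; push_cast; ring
      calc |2 * (cutCount F S : ℝ) - (cutCount E S : ℝ)|
          ≤ |2 * (cutCount F T : ℝ) - (cutCount E T : ℝ)|
            + |2 * (cutCount F (S \ T) : ℝ) - (cutCount E (S \ T) : ℝ)| := by
            rw [hkey]; exact abs_add_le _ _
        _ ≤ α * T.card + α * (S \ T).card := add_le_add hTbound hrest
        _ = α * S.card := by rw [hcardR]; ring
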